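/- Let R be a semiring with finite additive spine M, V an R-module, V₀ a submodule, and S a finite subset of V with V = V₀ + Σ^∞ RS. Fix an SA-submodule W₀ of V with W₀ ⊆ V₀. Then every chain W₀ ⊊ W₁ ⊊ ... ⊊ W_r of SA-submodules W_i of V satisfying W_i ∩ V₀ = W₀ has length r ≤ |M|·|S|. -/

import Mathlib

def halo (R : Type*) {V : Type*} [Semiring R] [AddCommMonoid V] [Module R V]
    (S : Set V) : Set V :=
  {v | ∃ l m : R, l • v ∈ S ∧ m • (l • v) = v}

def IsAdditiveSpine (R : Type*) {V : Type*} [Semiring R] [AddCommMonoid V] [Module R V]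
    (S : Set V) : Prop :=
  AddSubmonoid.closure (halo R S) = ⊤

def IsSA {R V : Type*} [Semiring R] [AddCommMonoid V] [Module R V]
    (W : Submodule R V) : Prop :=
  ∀ x y : V, x + y ∈ W → x ∈ W ∧ y ∈ W

section Aux
variable {R V : Type*} [Semiring R] [AddCommMonoid V] [Module R V]

/-- generators of the form h • s with h in the halo of A -/
def haloGens (A : Set R) (B : Set V) : Set V :=
  {v | ∃ h ∈ halo R A, ∃ s ∈ B, v = h • s}

lemma smul_mem_closure_haloGens {A : Set R} (hA : IsAdditiveSpine R A)
    {B : Set V} (r : R) {s : V} (hs : s ∈ B) :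
    r • s ∈ AddSubmonoid.closure (haloGens A B) := by
  have hr : r ∈ AddSubmonoid.closure (halo R A) := by
    rw [hA]; trivial
  induction hr using AddSubmonoid.closure_induction with
  | mem h hh => exact AddSubmonoid.subset_closure ⟨h, hh, s, hs, rfl⟩
  | zero => simpa using (AddSubmonoid.closure (haloGens A B)).zero_mem
  | add a b ha hb iha ihb =>
      rw [add_smul]; exact add_mem iha ihb

lemma smul_mem_closure_haloGens' {A : Set R} (hA : IsAdditiveSpine R A)
    {B : Set V} (r : R) {c : V} (hc : c ∈ AddSubmonoid.closure (haloGens A B)) :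
    r • c ∈ AddSubmonoid.closure (haloGens A B) := by
  induction hc using AddSubmonoid.closure_induction with
  | mem g hg =>
      obtain ⟨h, hh, s, hs, rfl⟩ := hg
      rw [smul_smul]
      exact smul_mem_closure_haloGens hA (r * h) hs
  | zero => simpa using (AddSubmonoid.closure (haloGens A B)).zero_mem
  | add a b ha hb iha ihb => rw [smul_add]; exact add_mem iha ihb

lemma mem_sup_haloGens {A : Set R} (hA : IsAdditiveSpine R A)
    (V₀ : Submodule R V) {B : Set V}
    (hgen : V₀ ⊔ Submodule.span R B = ⊤) (x : V) :
    x ∈ V₀.toAddSubmonoid ⊔ AddSubmonoid.closure (haloGens A B) := by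
  let T : Submodule R V :=
    { (V₀.toAddSubmonoid ⊔ AddSubmonoid.closure (haloGens A B) : AddSubmonoid V) with
      smul_mem' := by
        intro r x hx
        obtain ⟨v, hv, c, hc, rfl⟩ := AddSubmonoid.mem_sup.mp hx
        rw [smul_add]
        exact AddSubmonoid.mem_sup.mpr ⟨r • v, V₀.smul_mem r hv, r • c,
          smul_mem_closure_haloGens' hA r hc, rfl⟩ }
  have hT : (⊤ : Submodule R V) ≤ T := by
    rw [← hgen]
    refine sup_le (fun v hv => ?_) (Submodule.span_le.mpr (fun s hs => ?_))
    · show v ∈ V₀.toAddSubmonoid ⊔ AddSubmonoid.closure (haloGens A B)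
      exact AddSubmonoid.mem_sup.mpr ⟨v, hv, 0, zero_mem _, by simp⟩
    · have h1 : (1 : R) • s ∈ AddSubmonoid.closure (haloGens A B) :=
        smul_mem_closure_haloGens hA 1 hs
      rw [one_smul] at h1
      show s ∈ V₀.toAddSubmonoid ⊔ AddSubmonoid.closure (haloGens A B)
      exact AddSubmonoid.mem_sup.mpr ⟨0, zero_mem _, s, h1, by simp⟩
  exact hT trivial

lemma exists_gen_of_SA {A : Set R} {B : Set V}
    {W' W'' : Submodule R V} (hW' : IsSA W')
    {c : V} (hc : c ∈ AddSubmonoid.closure (haloGens A B))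
    (hcW' : c ∈ W') (hcW'' : c ∉ W'') :
    ∃ g ∈ haloGens A B, g ∈ W' ∧ g ∉ W'' := by
  induction hc using AddSubmonoid.closure_induction with
  | mem g hg => exact ⟨g, hg, hcW', hcW''⟩
  | zero => exact absurd (zero_mem W'') hcW''
  | add a b ha hb iha ihb =>
      obtain ⟨haW', hbW'⟩ := hW' a b hcW'
      by_cases h : a ∈ W''
      · exact ihb hbW' (fun hb' => hcW'' (add_mem h hb'))
      · exact iha haW' h

end Aux

theorem chain_bound_over_V0 {R V : Type*} [Semiring R] [AddCommMonoid V] [Module R V]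
    (M : Finset R) (hM : IsAdditiveSpine R (M : Set R))
    (V₀ : Submodule R V) (S : Finset V)
    (hgen : V₀ ⊔ Submodule.span R (S : Set V) = ⊤)
    (W₀ : Submodule R V) (hW₀ : IsSA W₀) (hW₀le : W₀ ≤ V₀)
    (r : ℕ) (W : Fin (r + 1) → Submodule R V)
    (hfirst : W 0 = W₀) (hmono : StrictMono W)
    (hSA : ∀ i, IsSA (W i)) (hinf : ∀ i, W i ⊓ V₀ = W₀) :
    r ≤ M.card * S.card := by
  -- for each step i, find h ∈ halo, s ∈ S with h • s ∈ W i.succ \ W i.castSucc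
  have key : ∀ i : Fin r, ∃ h ∈ halo R (M : Set R), ∃ s ∈ (S : Set V),
      h • s ∈ W i.succ ∧ h • s ∉ W i.castSucc := by
    intro i
    have hlt : W i.castSucc < W i.succ := hmono Fin.castSucc_lt_succ
    obtain ⟨x, hx1, hx2⟩ := SetLike.exists_of_lt hlt
    obtain ⟨v, hv, c, hc, rfl⟩ := AddSubmonoid.mem_sup.mp
      (mem_sup_haloGens hM V₀ hgen x)
    obtain ⟨hvW, hcW⟩ := hSA i.succ v c hx1
    have hv0 : v ∈ W i.castSucc := by
      have : v ∈ W i.succ ⊓ V₀ := ⟨hvW, hv⟩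
      rw [hinf] at this
      rw [← hfirst] at this
      exact hmono.monotone (Fin.zero_le _) this
    have hcW'' : c ∉ W i.castSucc := fun h => hx2 (add_mem hv0 h)
    obtain ⟨g, ⟨h, hh, s, hs, rfl⟩, hgW, hgW''⟩ :=
      exists_gen_of_SA (hSA i.succ) hc hcW hcW''
    exact ⟨h, hh, s, hs, hgW, hgW''⟩
  -- choose data
  choose h hh s hs hmem hnmem using key
  choose l m hlM hml using hh
  -- pair assignment
  let f : Fin r → {a // a ∈ M} × {b // b ∈ S} :=
    fun i => ⟨⟨l i • h i, hlM i⟩, ⟨s i, hs i⟩⟩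
  have hkey : ∀ i j : Fin r, i < j → f i ≠ f j := by
    intro i j hlt hij
    have ha : l i • h i = l j • h j := congrArg (fun p => (p.1 : R)) hij
    have hss : s i = s j := congrArg (fun p => (p.2 : V)) hij
    -- (l i • h i) • s i ∈ W i.succ
    have h1 : (l i • h i) • s i ∈ W i.succ := by
      rw [smul_assoc]
      exact Submodule.smul_mem _ _ (hmem i)
    -- h j • s j = m j • ((l j • h j) • s j)
    have h2 : h j • s j ∈ W i.succ := by
      have : h j • s j = m j • ((l j • h j) • s j) := by
        rw [← smul_assoc, hml j]
      rw [this, ← ha, ← hss]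
      exact Submodule.smul_mem _ _ h1
    have hle : W i.succ ≤ W j.castSucc := by
      apply hmono.monotone
      simp only [Fin.le_def, Fin.val_succ, Fin.coe_castSucc]
      have := Fin.lt_def.mp hlt
      omega
    exact hnmem j (hle h2)
  have hinj : Function.Injective f := by
    intro i j hij
    rcases lt_trichotomy i j with h | h | h
    · exact absurd hij (hkey i j h)
    · exact h
    · exact absurd hij.symm (hkey j i h)
  calc r = Fintype.card (Fin r) := (Fintype.card_fin r).symm
    _ ≤ Fintype.card ({a // a ∈ M} × {b // b ∈ S}) := Fintype.card_le_of_injective f hinj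
    _ = M.card * S.card := by simp [Fintype.card_prod, Fintype.card_coe]
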